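/- Let τ satisfy τ ∈ C¹, τ' > 0, τ(t) ≤ t, and limsup_{t→∞} t/τ(t) < ∞. Let r ∈ RV(δ+α) with δ < -1, α > 1, β conjugate to α, and R_D(t) = ∫_a^t r(s)^{1-β} ds (which diverges). Define τ_D = R_D ∘ τ ∘ R_D^{-1}. Then limsup_{s→∞} s/τ_D(s) < ∞. -/

import Mathlib

open Filter Real MeasureTheory

/-- `f` is regularly varying (at infinity) of index `θ`. -/
def RegVary (f : ℝ → ℝ) (θ : ℝ) : Prop :=
  ∀ l : ℝ, 0 < l → Filter.Tendsto (fun t => f (l * t) / f t) Filter.atTop (nhds (l ^ θ))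

theorem transformed_delay_limsup (a α β δ : ℝ) (hα : 1 < α)
    (hβ : 1 / α + 1 / β = 1) (hδ : δ < -1)
    (r τ Rinv : ℝ → ℝ) (hr : ∀ t, 0 < r t)
    (hrv : RegVary r (δ + α))
    (hτ1 : ContDiff ℝ 1 τ) (hτ2 : ∀ t, 0 < deriv τ t) (hτ3 : ∀ t, τ t ≤ t)
    (hτ4 : ∃ C, ∀ᶠ t in atTop, t ≤ C * τ t)
    (hdiv : Tendsto (fun t => ∫ s in a..t, (r s) ^ (1 - β)) atTop atTop)
    (hinv : ∀ t, Rinv (∫ s in a..t, (r s) ^ (1 - β)) = t) :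
    ∃ N, ∀ᶠ s in atTop, s ≤ N * (∫ u in a..(τ (Rinv s)), (r u) ^ (1 - β)) := by
  set f : ℝ → ℝ := fun u => r u ^ (1 - β) with hfdef
  have hfpos : ∀ u, 0 < f u := fun u => Real.rpow_pos_of_pos (hr u) _
  set R : ℝ → ℝ := fun t => ∫ s in a..t, f s with hRdef
  -- threshold T with integrability
  obtain ⟨T, hT⟩ : ∃ T, max a 1 ≤ T ∧ ∀ t, T ≤ t → IntervalIntegrable f volume a t := by
    have h1 : ∀ᶠ t in atTop, (1:ℝ) ≤ R t := hdiv.eventually_ge_atTop 1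
    rw [eventually_atTop] at h1
    obtain ⟨T0, hT0⟩ := h1
    refine ⟨max T0 (max a 1), le_max_right _ _, fun t ht => ?_⟩
    by_contra hni
    have := intervalIntegral.integral_undef hni
    have h2 := hT0 t (le_trans (le_max_left _ _) ht)
    rw [hRdef] at h2
    simp only [this] at h2
    linarith
  obtain ⟨hTa1, hTint⟩ := hT
  have hTa : a ≤ T := le_trans (le_max_left _ _) hTa1
  have hT1 : (1:ℝ) ≤ T := le_trans (le_max_right _ _) hTa1
  -- integrability on subintervals
  have hsub : ∀ x y, T ≤ x → x ≤ y → IntervalIntegrable f volume x y := by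
    intro x y hx hxy
    refine (hTint y (le_trans hx hxy)).mono_set ?_
    rw [Set.uIcc_of_le hxy, Set.uIcc_of_le (le_trans hTa (le_trans hx hxy))]
    exact Set.Icc_subset_Icc (le_trans hTa hx) le_rfl
  -- monotonicity
  have hmono : ∀ x y, T ≤ x → x ≤ y → R x ≤ R y := by
    intro x y hx hxy
    have hax : IntervalIntegrable f volume a x := hTint x hx
    have hxyI : IntervalIntegrable f volume x y := hsub x y hx hxy
    have := intervalIntegral.integral_add_adjacent_intervals hax hxyI
    have hnn : 0 ≤ ∫ s in x..y, f s :=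
      intervalIntegral.integral_nonneg hxy (fun u _ => (hfpos u).le)
    rw [hRdef]
    simp only
    linarith [this]
  -- continuity on [T, M]
  have hcont : ∀ M, T ≤ M → ContinuousOn R (Set.Icc T M) := by
    intro M hTM
    have hI : IntervalIntegrable f volume T M := hsub T M le_rfl hTM
    have hc : ContinuousOn (fun x => ∫ s in T..x, f s) (Set.uIcc T M) :=
      intervalIntegral.continuousOn_primitive_interval' hI Set.left_mem_uIcc
    rw [Set.uIcc_of_le hTM] at hc
    have heq : ∀ x ∈ Set.Icc T M, R x = R T + ∫ s in T..x, f s := by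
      intro x hx
      have := intervalIntegral.integral_add_adjacent_intervals
        (hTint T le_rfl) (hsub T x le_rfl hx.1)
      rw [hRdef]; simp only; linarith
    refine ContinuousOn.congr ?_ heq
    exact continuousOn_const.add hc
  -- key inversion lemma
  have hRinv : ∀ s, R T ≤ s → T ≤ Rinv s ∧ R (Rinv s) = s := by
    intro s hs
    obtain ⟨M, hM1, hM2⟩ : ∃ M, T ≤ M ∧ s ≤ R M := by
      have := hdiv.eventually_ge_atTop s
      rw [eventually_atTop] at this
      obtain ⟨M0, hM0⟩ := this
      exact ⟨max M0 T, le_max_right _ _, hM0 _ (le_max_left _ _)⟩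
    have hIVT := intermediate_value_Icc hM1 (hcont M hM1)
    have hsmem : s ∈ Set.Icc (R T) (R M) := ⟨hs, hM2⟩
    obtain ⟨t, ht1, ht2⟩ := hIVT hsmem
    have : Rinv s = t := by rw [← ht2]; exact hinv t
    rw [this, ht2]
    exact ⟨ht1.1, rfl⟩
  -- Rinv goes to infinity
  have hRinvBig : ∀ M, T ≤ M → ∀ s, R T ≤ s → R M < s → M < Rinv s := by
    intro M hM s hs hMs
    obtain ⟨h1, h2⟩ := hRinv s hs
    by_contra h
    push_neg at h
    have := hmono (Rinv s) M h1 h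
    rw [h2] at this
    linarith
  -- tau strictly monotone
  obtain ⟨C, hC⟩ := hτ4
  have hτmono : StrictMono τ :=
    strictMono_of_deriv_pos hτ2
  -- eventually tau positive
  have hτpos : ∀ᶠ t in atTop, 0 < τ t := by
    obtain ⟨t0, ht0⟩ : ∃ t0, 0 < τ t0 := by
      by_contra h
      push_neg at h
      have hev : ∀ᶠ t in atTop, t ≤ C * τ t ∧ max 0 (|C| * |τ 0| + 1) ≤ t :=
        hC.and (eventually_ge_atTop _)
      obtain ⟨t, ht1, ht2⟩ := hev.exists
      have h0t : (0:ℝ) ≤ t := le_trans (le_max_left _ _) ht2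
      have hτ0t : τ 0 ≤ τ t := hτmono.monotone h0t
      have habs : |τ t| ≤ |τ 0| := by
        rw [abs_of_nonpos (h t), abs_of_nonpos (h 0)]; linarith
      have : C * τ t ≤ |C| * |τ 0| :=
        le_trans (le_abs_self _) (by rw [abs_mul]; exact mul_le_mul_of_nonneg_left habs (abs_nonneg _))
      have : t ≤ |C| * |τ 0| := le_trans ht1 this
      have : |C| * |τ 0| + 1 ≤ t := le_trans (le_max_right _ _) ht2
      linarith
    filter_upwards [eventually_gt_atTop t0] with t ht
    exact lt_trans ht0 (hτmono ht)
  -- C positive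
  have hCpos : 0 < C := by
    obtain ⟨t, ht1, ht2, ht3⟩ := (hC.and (hτpos.and (eventually_ge_atTop (1:ℝ)))).exists
    nlinarith
  set C' : ℝ := max C 1 with hC'def
  have hC'1 : (1:ℝ) ≤ C' := le_max_right _ _
  have hC'pos : (0:ℝ) < C' := lt_of_lt_of_le one_pos hC'1
  have hCC' : C ≤ C' := le_max_left _ _
  -- regular variation bound
  set L : ℝ := (C' ^ (δ + α)) ^ (1 - β) with hLdef
  have hLpos : 0 < L := Real.rpow_pos_of_pos (Real.rpow_pos_of_pos hC'pos _) _
  have hfbound : ∀ᶠ v in atTop, f (C' * v) ≤ (L + 1) * f v := by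
    have h1 : Tendsto (fun v => r (C' * v) / r v) atTop (nhds (C' ^ (δ + α))) := hrv C' hC'pos
    have h2 : Tendsto (fun v => (r (C' * v) / r v) ^ (1 - β)) atTop (nhds L) := by
      rw [hLdef]
      exact h1.rpow_const (Or.inl (ne_of_gt (Real.rpow_pos_of_pos hC'pos _)))
    have h3 : ∀ v, (r (C' * v) / r v) ^ (1 - β) = f (C' * v) / f v := by
      intro v
      rw [hfdef]
      simp only []
      exact Real.div_rpow (hr _).le (hr _).le _
    simp only [h3] at h2
    have h4 : ∀ᶠ v in atTop, f (C' * v) / f v < L + 1 :=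
      h2.eventually (eventually_lt_nhds (by linarith : L < L + 1))
    filter_upwards [h4] with v hv
    have := (div_lt_iff₀ (hfpos v)).mp hv
    linarith [this]
  obtain ⟨V, hV⟩ := eventually_atTop.mp hfbound
  set M0 : ℝ := max V T with hM0def
  have hM0T : T ≤ M0 := le_max_right _ _
  have hM0V : V ≤ M0 := le_max_left _ _
  have hM01 : (1:ℝ) ≤ M0 := le_trans hT1 hM0T
  have hM0pos : (0:ℝ) < M0 := lt_of_lt_of_le one_pos hM01
  set W : ℝ := C' * M0 with hWdef
  have hWM0 : M0 ≤ W := by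
    rw [hWdef]; nlinarith
  have hWpos : 0 < W := lt_of_lt_of_le hM0pos hWM0
  set N0 : ℝ := 1 + C' * (L + 1) with hN0def
  -- key doubling bound
  have key : ∀ t, W ≤ t → R (C' * t) ≤ N0 * R t := by
    intro t hWt
    have htM0 : M0 ≤ t := le_trans hWM0 hWt
    have htT : T ≤ t := le_trans hM0T htM0
    have htpos : 0 < t := lt_of_lt_of_le hM0pos htM0
    have hdivM0 : M0 ≤ t / C' := (le_div_iff₀ hC'pos).mpr (by rw [mul_comm]; exact hWt)
    have hdivT : T ≤ t / C' := le_trans hM0T hdivM0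
    have hdivt : t / C' ≤ t := by
      rw [div_le_iff₀ hC'pos]; nlinarith
    have htCt : t ≤ C' * t := by nlinarith
    -- split R (C' * t)
    have hsplit : R (C' * t) = R t + ∫ s in t..(C' * t), f s := by
      have := intervalIntegral.integral_add_adjacent_intervals
        (hTint t htT) (hsub t (C' * t) htT htCt)
      rw [hRdef]; simp only; linarith
    -- change of variables
    have hcov : ∫ s in t..(C' * t), f s = C' * ∫ x in (t / C')..t, f (C' * x) := by
      have := intervalIntegral.integral_comp_mul_left f (ne_of_gt hC'pos)
        (a := t / C') (b := t)
      rw [mul_div_cancel₀ t (ne_of_gt hC'pos)] at this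
      rw [this, smul_eq_mul]
      field_simp
    -- integrability of composed fn
    have hIcomp : IntervalIntegrable (fun x => f (C' * x)) volume (t / C') t := by
      have := (hsub t (C' * t) htT htCt).comp_mul_left (c := C')
      rwa [mul_comm C' t, mul_div_assoc, div_self (ne_of_gt hC'pos), mul_one] at this
    have hI2 : IntervalIntegrable f volume (t / C') t := hsub _ _ hdivT hdivt
    -- pointwise bound
    have hmono2 : (∫ x in (t / C')..t, f (C' * x)) ≤ ∫ x in (t / C')..t, (L + 1) * f x := by
      refine intervalIntegral.integral_mono_on hdivt hIcomp (hI2.const_mul _) ?_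
      intro x hx
      exact hV x (le_trans hM0V (le_trans hdivM0 hx.1))
    rw [intervalIntegral.integral_const_mul] at hmono2
    -- middle integral bounded by R t
    have hmid : (∫ x in (t / C')..t, f x) ≤ R t := by
      have hadd := intervalIntegral.integral_add_adjacent_intervals
        (hTint (t / C') hdivT) hI2
      have hnn : 0 ≤ ∫ s in a..(t / C'), f s :=
        intervalIntegral.integral_nonneg (le_trans hTa hdivT) (fun u _ => (hfpos u).le)
      rw [hRdef]; simp only; linarith
    have hnn2 : 0 ≤ ∫ x in (t / C')..t, f x :=
      intervalIntegral.integral_nonneg hdivt (fun u _ => (hfpos u).le)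
    have hx1 := mul_le_mul_of_nonneg_left hmono2 hC'pos.le
    have hx2 : C' * ((L + 1) * ∫ x in (t / C')..t, f x) ≤ C' * ((L + 1) * R t) :=
      mul_le_mul_of_nonneg_left
        (mul_le_mul_of_nonneg_left hmid (by linarith : (0:ℝ) ≤ L + 1)) hC'pos.le
    have hring : N0 * R t = R t + C' * ((L + 1) * R t) := by rw [hN0def]; ring
    rw [hsplit, hcov, hring]
    linarith [hx1, hx2]
  -- eventual properties
  have hWτ : ∀ᶠ t in atTop, W ≤ τ t := by
    filter_upwards [hC, eventually_ge_atTop (C * W)] with t ht1 ht2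
    have h3 : t / C ≤ τ t := (div_le_iff₀ hCpos).mpr (by linarith [mul_comm C (τ t)])
    have h4 : W ≤ t / C := (le_div_iff₀ hCpos).mpr (by linarith [mul_comm C W, mul_comm W C])
    linarith
  obtain ⟨t₁, ht₁⟩ := eventually_atTop.mp (hC.and hWτ)
  refine ⟨N0, ?_⟩
  filter_upwards [eventually_ge_atTop (R T), eventually_gt_atTop (R (max t₁ T))]
    with s hs1 hs2
  obtain ⟨hTle, hReq⟩ := hRinv s hs1
  have ht2lt : max t₁ T < Rinv s := hRinvBig (max t₁ T) (le_max_right _ _) s hs1 hs2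
  obtain ⟨hq1, hq2⟩ := ht₁ (Rinv s) (le_of_lt (lt_of_le_of_lt (le_max_left _ _) ht2lt))
  have hstep1 : Rinv s ≤ C' * τ (Rinv s) :=
    le_trans hq1 (mul_le_mul_of_nonneg_right hCC' (le_trans hWpos.le hq2))
  have hstep2 : R (Rinv s) ≤ R (C' * τ (Rinv s)) := hmono _ _ hTle hstep1
  have hstep3 := key (τ (Rinv s)) hq2
  show s ≤ N0 * R (τ (Rinv s))
  calc s = R (Rinv s) := hReq.symm
    _ ≤ R (C' * τ (Rinv s)) := hstep2
    _ ≤ N0 * R (τ (Rinv s)) := hstep3
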